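/- arXiv:0812.0601 — 2 statements merged into one kernel-verified Lean document; each statement's English description precedes it below -/
import Mathlib

section
/- If {A_k} is a sequence of complex n×n matrices such that for every I ⊆ {1,...,n} the principal minors P_I(A_k) form a bounded sequence in ℂ, then for every cyclic permutation π, the sequence of cycle monomial values c_π(A_k) is also bounded. -/
/-- The principal minor of `A` with rows and columns indexed by `I`. -/
noncomputable def principalMinor {n : ℕ} {R : Type*} [CommRing R]
    (A : Matrix (Fin n) (Fin n) R) (I : Finset (Fin n)) : R :=
  (A.submatrix (fun i : {x // x ∈ I} => (i : Fin n))
    (fun j : {x // x ∈ I} => (j : Fin n))).det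

set_option maxHeartbeats 1000000
set_option linter.unusedSectionVars false
set_option linter.unusedVariables false

namespace PMB
open List

variable {α : Type*} [DecidableEq α]

/-- Path edges of a list: consecutive pairs. -/
def pe : List α → Multiset (α × α)
  | [] => 0
  | [_] => 0
  | a :: b :: t => (a, b) ::ₘ pe (b :: t)

@[simp] lemma pe_nil : (pe ([] : List α)) = 0 := rfl
@[simp] lemma pe_single (a : α) : pe [a] = 0 := rfl
@[simp] lemma pe_cons_cons (a b : α) (t : List α) :
    pe (a :: b :: t) = (a, b) ::ₘ pe (b :: t) := rfl

lemma pe_cons (a : α) (l : List α) (h : l ≠ []) :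
    pe (a :: l) = (a, l.head h) ::ₘ pe l := by
  cases l with
  | nil => exact absurd rfl h
  | cons b t => rfl

lemma pe_append (l1 l2 : List α) (h1 : l1 ≠ []) (h2 : l2 ≠ []) :
    pe (l1 ++ l2) = pe l1 + pe l2 + {(l1.getLast h1, l2.head h2)} := by
  induction l1 with
  | nil => exact absurd rfl h1
  | cons a t ih =>
      cases t with
      | nil =>
          simp only [List.singleton_append, pe_cons _ _ h2, pe_single,
            List.getLast_singleton]
          simp only [← Multiset.singleton_add]
          abel
      | cons b t' =>
          rw [List.cons_append, List.cons_append, pe_cons_cons, ← List.cons_append,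
            ih (by simp), pe_cons_cons,
            show (a :: b :: t').getLast h1 = (b :: t').getLast (by simp) from
              List.getLast_cons (by simp)]
          simp only [← Multiset.singleton_add]
          abel

/-- Cycle edges of a list (consecutive pairs, cyclically). -/
def edges : List α → Multiset (α × α)
  | [] => 0
  | a :: t => pe (a :: t) + {((a :: t).getLast (by simp), a)}

@[simp] lemma edges_nil : edges ([] : List α) = 0 := rfl

lemma edges_eq (l : List α) (h : l ≠ []) :
    edges l = pe l + {(l.getLast h, l.head h)} := by
  cases l with
  | nil => exact absurd rfl h
  | cons a t => rfl

lemma edges_rotate_one (l : List α) : edges (l.rotate 1) = edges l := by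
  cases l with
  | nil => rfl
  | cons a t =>
      cases t with
      | nil => simp
      | cons b t' =>
          have hrot : (a :: b :: t').rotate 1 = (b :: t') ++ [a] := by
            rw [show (1 : ℕ) = 0 + 1 from rfl, List.rotate_cons_succ, List.rotate_zero]
          rw [hrot, edges_eq _ (by simp), edges_eq _ (by simp),
            pe_append _ _ (by simp) (by simp)]
          rw [show ((b :: t') ++ [a]).getLast (by simp) = a from
               List.getLast_append_singleton _,
             List.head_append_of_ne_nil (by simp), pe_cons_cons,
             show (a :: b :: t').getLast (by simp) = (b :: t').getLast (by simp) from
               List.getLast_cons (by simp)]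
          simp only [List.head_cons, pe_single]
          simp only [← Multiset.singleton_add]
          abel

lemma edges_rotate (l : List α) (k : ℕ) : edges (l.rotate k) = edges l := by
  induction k with
  | zero => simp
  | succ k ih =>
      have : l.rotate (k + 1) = (l.rotate k).rotate 1 := by
        rw [List.rotate_rotate]
      rw [this, edges_rotate_one, ih]

lemma edges_isRotated {l l' : List α} (h : l ~r l') : edges l = edges l' := by
  obtain ⟨k, rfl⟩ := h
  exact (edges_rotate l k).symm

lemma key1 (z : α) (l : List α) (h : l ≠ []) :
    edges (z :: l) + {(l.getLast h, l.head h)}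
      = edges l + {(l.getLast h, z)} + {(z, l.head h)} := by
  rw [edges_eq (z :: l) (by simp), edges_eq l h, pe_cons z l h]
  rw [List.getLast_cons h]
  simp only [List.head_cons]
  simp only [← Multiset.singleton_add]
  abel

lemma key4 (z : α) (X Y : List α) (hX : X ≠ []) (hY : Y ≠ []) :
    edges (z :: (X ++ Y)) + {(X.getLast hX, z)} + {(z, Y.head hY)}
      = edges (z :: X) + edges (z :: Y) + {(X.getLast hX, Y.head hY)} := by
  have hXY : X ++ Y ≠ [] := by simp [hX]
  rw [edges_eq (z :: (X ++ Y)) (by simp), edges_eq (z :: X) (by simp),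
    edges_eq (z :: Y) (by simp), pe_cons z _ hXY, pe_cons z X hX, pe_cons z Y hY,
    pe_append X Y hX hY]
  rw [show (z :: (X ++ Y)).getLast (by simp) = (X ++ Y).getLast hXY from
        List.getLast_cons hXY,
      List.getLast_append_of_ne_nil (l := X) (l' := Y) _ hY,
      show (z :: X).getLast (by simp) = X.getLast hX from List.getLast_cons hX,
      show (z :: Y).getLast (by simp) = Y.getLast hY from List.getLast_cons hY,
      List.head_append_of_ne_nil hX]
  simp only [List.head_cons]
  simp only [← Multiset.singleton_add]
  abel

lemma key2 (z : α) (l : List α) (k : ℕ) (hk1 : 1 ≤ k) (hk2 : k < l.length) :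
    edges (z :: l) + edges (z :: l.rotate k)
      = edges (z :: l.take k) + edges (z :: l.drop k) + edges l := by
  have hrot : l.rotate k = l.drop k ++ l.take k :=
    List.rotate_eq_drop_append_take (le_of_lt hk2)
  set T := l.take k with hTk
  set D := l.drop k with hDk
  have hTne : T ≠ [] := by
    intro h
    have := congrArg List.length h
    simp [hTk, Nat.min_eq_left (le_of_lt hk2)] at this
    omega
  have hDne : D ≠ [] := by
    intro h
    have := congrArg List.length h
    simp [hDk] at this
    omega
  have hl : l = T ++ D := (List.take_append_drop k l).symm
  rw [hrot, hl]
  rw [edges_eq (z :: (T ++ D)) (by simp), edges_eq (z :: (D ++ T)) (by simp),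
      edges_eq (z :: T) (by simp), edges_eq (z :: D) (by simp),
      edges_eq (T ++ D) (by simp [hTne]),
      pe_cons z (T ++ D) (by simp [hTne]), pe_cons z (D ++ T) (by simp [hDne]),
      pe_cons z T hTne, pe_cons z D hDne,
      pe_append T D hTne hDne, pe_append D T hDne hTne]
  rw [show (z :: (T ++ D)).getLast (by simp) = D.getLast hDne from by
        rw [List.getLast_cons (by simp [hTne]), List.getLast_append_of_ne_nil (l := T) (l' := D) _ hDne],
      show (z :: (D ++ T)).getLast (by simp) = T.getLast hTne from by
        rw [List.getLast_cons (by simp [hDne]), List.getLast_append_of_ne_nil (l := D) (l' := T) _ hTne],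
      show (z :: T).getLast (by simp) = T.getLast hTne from List.getLast_cons hTne,
      show (z :: D).getLast (by simp) = D.getLast hDne from List.getLast_cons hDne,
      show (T ++ D).getLast (by simp [hTne]) = D.getLast hDne from
        List.getLast_append_of_ne_nil (l := T) (l' := D) _ hDne,
      List.head_append_of_ne_nil hTne, List.head_append_of_ne_nil hDne]
  simp only [List.head_cons]
  simp only [← Multiset.singleton_add]
  abel

lemma closing_mem (l : List α) (h : l ≠ []) : (l.getLast h, l.head h) ∈ edges l := by
  rw [edges_eq l h]
  simp

lemma pe_mem_split {p q : α} : ∀ (l : List α), (p, q) ∈ pe l →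
    ∃ w1 w2, l = w1 ++ p :: q :: w2
  | [], h => by simp [pe_nil] at h
  | [a], h => by simp at h
  | a :: b :: t, h => by
      rw [pe_cons_cons, Multiset.mem_cons] at h
      rcases h with h | h
      · exact ⟨[], t, by simp [Prod.ext_iff] at h; simp [h.1, h.2]⟩
      · obtain ⟨w1, w2, hw⟩ := pe_mem_split (b :: t) h
        exact ⟨a :: w1, w2, by rw [List.cons_append, ← hw]⟩

lemma edge_mem_rot {x y : α} {l : List α} (h : (x, y) ∈ edges l) :
    ∃ r, l ~r r ∧ ∃ (hr : r ≠ []), r.head hr = y ∧ r.getLast hr = x := by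
  have hl : l ≠ [] := by rintro rfl; simp at h
  rw [edges_eq l hl] at h
  rcases Multiset.mem_add.mp h with h | h
  · obtain ⟨w1, w2, rfl⟩ := pe_mem_split l h
    refine ⟨(y :: w2) ++ (w1 ++ [x]), ?_, by simp, ?_, ?_⟩
    · refine ⟨(w1 ++ [x]).length, ?_⟩
      have hsplit : w1 ++ x :: y :: w2 = (w1 ++ [x]) ++ (y :: w2) := by simp
      rw [hsplit, List.rotate_eq_drop_append_take (by simp), List.drop_left, List.take_left]
    · simp
    · rw [List.getLast_append_of_ne_nil (l' := w1 ++ [x]) _ (by simp)]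
      exact List.getLast_append_singleton _
  · rw [Multiset.mem_singleton, Prod.ext_iff] at h
    exact ⟨l, IsRotated.refl l, hl, h.2.symm, h.1.symm⟩


lemma perm_toFinset {l l' : List α} (h : l ~ l') : l.toFinset = l'.toFinset := by
  ext a; simp [List.mem_toFinset, h.mem_iff]

lemma exists_rot_head {z : α} {v : List α} (h : z ∈ v) : ∃ v₁, v ~r (z :: v₁) := by
  obtain ⟨s, t, rfl⟩ := List.append_of_mem h
  refine ⟨t ++ s, ⟨s.length, ?_⟩⟩
  rw [List.rotate_eq_drop_append_take (by simp), List.drop_left, List.take_left]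
  simp

lemma list_sum_mem {β : Type*} [DecidableEq β] {a : β × β} {f : List β → Multiset (β × β)} :
    ∀ {L : List (List β)}, a ∈ (L.map f).sum → ∃ l ∈ L, a ∈ f l
  | [], h => by simp at h
  | l :: L, h => by
      rw [List.map_cons, List.sum_cons, Multiset.mem_add] at h
      rcases h with h | h
      · exact ⟨l, by simp, h⟩
      · obtain ⟨l', hl', hm⟩ := list_sum_mem h
        exact ⟨l', by simp [hl'], hm⟩

theorem DECL : ∀ (m : ℕ) (u v : List α), u.length = m → v.length = m →
    u.Nodup → v.Nodup → u.toFinset = v.toFinset → ¬u ~r v →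
    ∃ L : List (List α),
      (∀ l ∈ L, l.Nodup ∧ 2 ≤ l.length ∧ l.length < m ∧ l.toFinset ⊆ u.toFinset) ∧
      edges u + edges v = (L.map edges).sum := by
  intro m
  induction m using Nat.strong_induction_on with
  | _ m IH =>
  intro u v hul hvl hun hvn hS hne
  have hu0 : u ≠ [] := by
    rintro rfl
    simp only [List.length_nil] at hul
    have : v = [] := List.length_eq_zero_iff.mp (by omega)
    exact hne (by rw [this])
  obtain ⟨z, u₁, rfl⟩ : ∃ z u₁, u = z :: u₁ :=
    ⟨u.head hu0, u.tail, (List.cons_head_tail hu0).symm⟩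
  have hzv : z ∈ v := by
    rw [← List.mem_toFinset, ← hS]; simp
  obtain ⟨v₁, hvrot⟩ := exists_rot_head hzv
  have hvn' : (z :: v₁).Nodup := hvrot.nodup_iff.mp hvn
  have hvl' : (z :: v₁).length = m := by rw [← hvrot.perm.length_eq]; exact hvl
  have hSv : (z :: v₁).toFinset = v.toFinset := (perm_toFinset hvrot.perm).symm
  have hEv : edges v = edges (z :: v₁) := edges_isRotated hvrot
  have hne' : ¬(z :: u₁) ~r (z :: v₁) := fun h => hne (h.trans hvrot.symm)
  have hzu₁ : z ∉ u₁ := by simp at hun; exact hun.1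
  have hzv₁ : z ∉ v₁ := by simp at hvn'; exact hvn'.1
  have hu₁n : u₁.Nodup := by simp at hun; exact hun.2
  have hv₁n : v₁.Nodup := by simp at hvn'; exact hvn'.2
  have hS₁ : u₁.toFinset = v₁.toFinset := by
    have h1 : (z :: u₁).toFinset = insert z u₁.toFinset := by simp
    have h2 : (z :: v₁).toFinset = insert z v₁.toFinset := by simp
    have : insert z u₁.toFinset = insert z v₁.toFinset := by
      rw [← h1, ← h2, hS, hSv]
    have e1 : u₁.toFinset = (insert z u₁.toFinset).erase z := by
      rw [Finset.erase_insert (by simp [hzu₁])]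
    have e2 : v₁.toFinset = (insert z v₁.toFinset).erase z := by
      rw [Finset.erase_insert (by simp [hzv₁])]
    rw [e1, e2, this]
  have hm1 : u₁.length + 1 = m := by simpa using hul
  have hm2 : v₁.length + 1 = m := by simpa using hvl'
  have hSu : u₁.toFinset ⊆ (z :: u₁).toFinset := by
    intro a ha; simp at ha ⊢; exact Or.inr ha
  by_cases hBC : u₁ ~r v₁
  · -- Case B : v₁ is a rotation of u₁
    obtain ⟨k0, hk0⟩ := hBC
    have hvu : v₁ ≠ u₁ := by
      rintro rfl
      exact hne' (IsRotated.refl _)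
    have hu₁ne : u₁ ≠ [] := by
      rintro rfl
      rw [List.rotate_nil] at hk0
      exact hvu hk0.symm
    have hpos : 0 < u₁.length := List.length_pos_iff.mpr hu₁ne
    set k := k0 % u₁.length with hkdef
    have hk : u₁.rotate k = v₁ := by rw [hkdef, List.rotate_mod]; exact hk0
    have hk1 : 1 ≤ k := by
      rcases Nat.eq_zero_or_pos k with h | h
      · exfalso; rw [h, List.rotate_zero] at hk; exact hvu hk.symm
      · exact h
    have hk2 : k < u₁.length := Nat.mod_lt _ hpos
    refine ⟨[z :: u₁.take k, z :: u₁.drop k, u₁], ?_, ?_⟩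
    · intro l hl
      have hlen : 2 ≤ u₁.length := by omega
      simp only [List.mem_cons, List.not_mem_nil, or_false] at hl
      rcases hl with rfl | rfl | rfl
      · refine ⟨?_, ?_, ?_, ?_⟩
        · exact List.Nodup.cons (fun h => hzu₁ ((List.take_subset _ _) h))
            (hu₁n.sublist (List.take_sublist _ _))
        · simp; omega
        · simp; omega
        · intro a ha; simp at ha ⊢
          rcases ha with rfl | ha
          · exact Or.inl rfl
          · exact Or.inr (List.take_subset _ _ ha)
      · refine ⟨?_, ?_, ?_, ?_⟩
        · exact List.Nodup.cons (fun h => hzu₁ ((List.drop_subset _ _) h))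
            (hu₁n.sublist (List.drop_sublist _ _))
        · simp; omega
        · simp; omega
        · intro a ha; simp at ha ⊢
          rcases ha with rfl | ha
          · exact Or.inl rfl
          · exact Or.inr (List.drop_subset _ _ ha)
      · exact ⟨hu₁n, by omega, by omega, hSu⟩

    · rw [hEv, ← hk]
      have := key2 z u₁ k hk1 hk2
      simp only [List.map_cons, List.map_nil, List.sum_cons, List.sum_nil, add_zero]
      rw [this]
      abel
  · -- Case A : recurse on u₁ v₁
    have hu₁ne : u₁ ≠ [] := by
      rintro rfl
      simp only [List.length_nil] at hm1
      have : v₁ = [] := List.length_eq_zero_iff.mp (by omega)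
      exact hBC (by rw [this])
    have hv₁ne : v₁ ≠ [] := by
      rintro rfl
      simp only [List.length_nil] at hm2
      have : u₁ = [] := List.length_eq_zero_iff.mp (by omega)
      exact hBC (by rw [this])
    have hmlt : u₁.length < m := by omega
    obtain ⟨L', hL', hsum⟩ := IH u₁.length hmlt u₁ v₁ rfl (by omega) hu₁n hv₁n hS₁ hBC
    set x := u₁.getLast hu₁ne with hxdef
    set y := u₁.head hu₁ne with hydef
    set p := v₁.getLast hv₁ne with hpdef
    set q := v₁.head hv₁ne with hqdef
    have hkey1u : edges (z :: u₁) + {(x, y)} = edges u₁ + {(x, z)} + {(z, y)} :=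
      key1 z u₁ hu₁ne
    have hkey1v : edges (z :: v₁) + {(p, q)} = edges v₁ + {(p, z)} + {(z, q)} :=
      key1 z v₁ hv₁ne
    -- locate the part containing (x, y)
    have hmem : (x, y) ∈ (L'.map edges).sum := by
      rw [← hsum]
      exact Multiset.mem_add.mpr (Or.inl (closing_mem u₁ hu₁ne))
    obtain ⟨l1, hl1L, hl1mem⟩ := list_sum_mem hmem
    obtain ⟨hl1nd, hl1len, hl1lt, hl1sub⟩ := hL' l1 hl1L
    obtain ⟨r, hrot1, hrne, hrhead, hrlast⟩ := edge_mem_rot hl1mem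
    have hrnd : r.Nodup := hrot1.nodup_iff.mp hl1nd
    have hrlen : r.length = l1.length := hrot1.perm.length_eq.symm
    have hrsub : r.toFinset ⊆ u₁.toFinset := by
      rw [perm_toFinset hrot1.perm.symm]; exact hl1sub
    have hzr : z ∉ r := fun h => hzu₁ (by
      have := hrsub (List.mem_toFinset.mpr h); exact List.mem_toFinset.mp this)
    have hl1znd : (z :: r).Nodup := List.Nodup.cons hzr hrnd
    have hkey1r : edges (z :: r) + {(x, y)} = edges l1 + {(x, z)} + {(z, y)} := by
      have h := key1 z r hrne
      rw [hrhead, hrlast] at h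
      rw [h, edges_isRotated hrot1.symm]
    obtain ⟨L₂, hperm⟩ : ∃ L₂, L' ~ l1 :: L₂ := ⟨_, List.perm_cons_erase hl1L⟩
    have hsum' : edges u₁ + edges v₁ = edges l1 + (L₂.map edges).sum := by
      rw [hsum, (hperm.map edges).sum_eq, List.map_cons, List.sum_cons]
    by_cases hA1 : ∃ l2 ∈ L₂, (p, q) ∈ edges l2
    · -- lift z into two distinct parts
      obtain ⟨l2, hl2L, hl2mem⟩ := hA1
      have hl2L' : l2 ∈ L' := hperm.symm.subset (List.mem_cons_of_mem _ hl2L)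
      obtain ⟨hl2nd, hl2len, hl2lt, hl2sub⟩ := hL' l2 hl2L'
      obtain ⟨r2, hrot2, hr2ne, hr2head, hr2last⟩ := edge_mem_rot hl2mem
      have hr2nd : r2.Nodup := hrot2.nodup_iff.mp hl2nd
      have hr2len : r2.length = l2.length := hrot2.perm.length_eq.symm
      have hr2sub : r2.toFinset ⊆ u₁.toFinset := by
        rw [perm_toFinset hrot2.perm.symm]; exact hl2sub
      have hzr2 : z ∉ r2 := fun h => hzu₁ (by
        have := hr2sub (List.mem_toFinset.mpr h); exact List.mem_toFinset.mp this)
      have hl2znd : (z :: r2).Nodup := List.Nodup.cons hzr2 hr2nd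
      have hkey1r2 : edges (z :: r2) + {(p, q)} = edges l2 + {(p, z)} + {(z, q)} := by
        have h := key1 z r2 hr2ne
        rw [hr2head, hr2last] at h
        rw [h, edges_isRotated hrot2.symm]
      obtain ⟨L₃, hperm2⟩ : ∃ L₃, L₂ ~ l2 :: L₃ := ⟨_, List.perm_cons_erase hl2L⟩
      have hsum'' : edges u₁ + edges v₁
          = edges l1 + edges l2 + (L₃.map edges).sum := by
        rw [hsum', (hperm2.map edges).sum_eq, List.map_cons, List.sum_cons]
        abel
      refine ⟨(z :: r) :: (z :: r2) :: L₃, ?_, ?_⟩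
      · intro l hl
        simp only [List.mem_cons] at hl
        rcases hl with rfl | rfl | hl
        · refine ⟨hl1znd, by simp; omega, by simp; omega, ?_⟩
          intro a ha; simp at ha
          rcases ha with rfl | ha
          · simp
          · exact hSu (hrsub (List.mem_toFinset.mpr ha))
        · refine ⟨hl2znd, by simp; omega, by simp; omega, ?_⟩
          intro a ha; simp at ha
          rcases ha with rfl | ha
          · simp
          · exact hSu (hr2sub (List.mem_toFinset.mpr ha))
        · have hlmem : l ∈ L' := hperm.symm.subset (by
            simp only [List.mem_cons]
            exact Or.inr (hperm2.symm.subset (by simp [hl])))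
          obtain ⟨h1, h2, h3, h4⟩ := hL' l hlmem
          exact ⟨h1, h2, by omega, fun a ha => hSu (h4 ha)⟩
      · simp only [List.map_cons, List.sum_cons]
        have goal_eq : edges (z :: u₁) + edges v
            = edges (z :: r) + (edges (z :: r2) + (L₃.map edges).sum) := by
          rw [hEv]
          have cancel := fun (a b c : Multiset (α × α)) (h : a + c = b + c) =>
            add_right_cancel h
          apply cancel _ _ ({(x, y)} + {(p, q)})
          calc edges (z :: u₁) + edges (z :: v₁) + ({(x, y)} + {(p, q)})
              = (edges (z :: u₁) + {(x, y)}) + (edges (z :: v₁) + {(p, q)}) := by abel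
            _ = (edges u₁ + {(x, z)} + {(z, y)}) + (edges v₁ + {(p, z)} + {(z, q)}) := by
                rw [hkey1u, hkey1v]
            _ = (edges u₁ + edges v₁) + ({(x, z)} + {(z, y)} + {(p, z)} + {(z, q)}) := by abel
            _ = (edges l1 + edges l2 + (L₃.map edges).sum)
                  + ({(x, z)} + {(z, y)} + {(p, z)} + {(z, q)}) := by rw [hsum'']
            _ = (edges l1 + {(x, z)} + {(z, y)}) + (edges l2 + {(p, z)} + {(z, q)})
                  + (L₃.map edges).sum := by abel
            _ = (edges (z :: r) + {(x, y)}) + (edges (z :: r2) + {(p, q)})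
                  + (L₃.map edges).sum := by rw [hkey1r, hkey1r2]
            _ = edges (z :: r) + (edges (z :: r2) + (L₃.map edges).sum)
                  + ({(x, y)} + {(p, q)}) := by abel
        exact goal_eq
    · -- the edge (p, q) lies in the lifted part: split it
      have hpq_v : (p, q) ∈ edges v₁ := closing_mem v₁ hv₁ne
      have hnotrest : (p, q) ∉ (L₂.map edges).sum := by
        intro h
        obtain ⟨l2, hl2, hm2⟩ := list_sum_mem h
        exact hA1 ⟨l2, hl2, hm2⟩
      have hcount : 1 ≤ Multiset.count (p, q) (edges (z :: r)) := by
        have c1 := congrArg (Multiset.count (p, q)) hsum'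
        have c2 := congrArg (Multiset.count (p, q)) hkey1r
        simp only [Multiset.count_add] at c1 c2
        have c3 : Multiset.count (p, q) ((L₂.map edges).sum) = 0 :=
          Multiset.count_eq_zero.mpr hnotrest
        have c4 : 1 ≤ Multiset.count (p, q) (edges v₁) :=
          Multiset.one_le_count_iff_mem.mpr hpq_v
        by_cases hxy : (p, q) = (x, y)
        · have c5 : 1 ≤ Multiset.count (p, q) (edges u₁) :=
            Multiset.one_le_count_iff_mem.mpr (hxy ▸ closing_mem u₁ hu₁ne)
          have c6 : Multiset.count (p, q) ({(x, y)} : Multiset (α × α)) = 1 := by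
            rw [hxy]; simp
          omega
        · have c6 : Multiset.count (p, q) ({(x, y)} : Multiset (α × α)) = 0 := by
            simp [Multiset.count_singleton, hxy]
          omega
      have hpqmem : (p, q) ∈ edges (z :: r) :=
        Multiset.one_le_count_iff_mem.mp hcount
      have hpz : p ≠ z := fun h => hzv₁ (h ▸ (hpdef ▸ List.getLast_mem hv₁ne))
      have hqz : q ≠ z := fun h => hzv₁ (h ▸ (hqdef ▸ List.head_mem hv₁ne))
      have hpq_pe : (p, q) ∈ pe r := by
        rw [edges_eq (z :: r) (by simp), pe_cons z r hrne] at hpqmem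
        rcases Multiset.mem_add.mp hpqmem with h | h
        · rcases Multiset.mem_cons.mp h with h | h
          · exact absurd (congrArg Prod.fst h) (by simpa using hpz)
          · exact h
        · rw [Multiset.mem_singleton] at h
          exact absurd (congrArg Prod.snd h) (by simpa using hqz)
      obtain ⟨w1, w2, hw⟩ := pe_mem_split r hpq_pe
      have hkey4 : edges (z :: r) + {(p, z)} + {(z, q)}
          = edges (z :: (w1 ++ [p])) + edges (z :: q :: w2) + {(p, q)} := by
        have h4 := key4 z (w1 ++ [p]) (q :: w2) (by simp) (by simp)
        rw [List.getLast_append_singleton] at h4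
        simp only [List.head_cons] at h4
        rw [← h4]
        congr 1
        rw [hw]
        simp
      have hla_sub : (z :: (w1 ++ [p])).Sublist (z :: r) := by
        rw [hw]
        refine List.Sublist.cons₂ z ?_
        have : (w1 ++ [p]).Sublist (w1 ++ p :: q :: w2) := by
          refine List.Sublist.append_left ?_ w1
          exact List.cons_sublist_cons.mpr (List.nil_sublist _)
        exact this
      have hlb_sub : (z :: q :: w2).Sublist (z :: r) := by
        rw [hw]
        refine List.Sublist.cons₂ z ?_
        exact (List.sublist_cons_self p (q :: w2)).trans
          (List.sublist_append_right w1 (p :: q :: w2))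
      have hrw_len : w1.length + w2.length + 2 = r.length := by
        rw [hw]; simp; omega
      refine ⟨(z :: (w1 ++ [p])) :: (z :: q :: w2) :: L₂, ?_, ?_⟩
      · intro l hl
        simp only [List.mem_cons] at hl
        rcases hl with rfl | rfl | hl
        · refine ⟨hl1znd.sublist hla_sub, by simp,
            by simp only [List.length_cons, List.length_append, List.length_singleton, List.length_nil]; omega, ?_⟩
          intro a ha
          have := hla_sub.subset (List.mem_toFinset.mp ha)
          simp at this
          rcases this with rfl | h
          · simp
          · exact hSu (hrsub (List.mem_toFinset.mpr h))
        · refine ⟨hl1znd.sublist hlb_sub, by simp,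
            by simp only [List.length_cons]; omega, ?_⟩
          intro a ha
          have := hlb_sub.subset (List.mem_toFinset.mp ha)
          simp at this
          rcases this with rfl | h
          · simp
          · exact hSu (hrsub (List.mem_toFinset.mpr h))
        · have hlmem : l ∈ L' := hperm.symm.subset (by simp [hl])
          obtain ⟨h1, h2, h3, h4⟩ := hL' l hlmem
          exact ⟨h1, h2, by omega, fun a ha => hSu (h4 ha)⟩
      · simp only [List.map_cons, List.sum_cons]
        rw [hEv]
        have cancel := fun (a b c : Multiset (α × α)) (h : a + c = b + c) =>
          add_right_cancel h
        apply cancel _ _ ({(x, y)} + {(p, q)})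
        calc edges (z :: u₁) + edges (z :: v₁) + ({(x, y)} + {(p, q)})
            = (edges (z :: u₁) + {(x, y)}) + (edges (z :: v₁) + {(p, q)}) := by abel
          _ = (edges u₁ + {(x, z)} + {(z, y)}) + (edges v₁ + {(p, z)} + {(z, q)}) := by
              rw [hkey1u, hkey1v]
          _ = (edges u₁ + edges v₁) + ({(x, z)} + {(z, y)} + {(p, z)} + {(z, q)}) := by abel
          _ = (edges l1 + (L₂.map edges).sum)
                + ({(x, z)} + {(z, y)} + {(p, z)} + {(z, q)}) := by rw [hsum']
          _ = (edges l1 + {(x, z)} + {(z, y)}) + ({(p, z)} + {(z, q)})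
                + (L₂.map edges).sum := by abel
          _ = (edges (z :: r) + {(x, y)}) + ({(p, z)} + {(z, q)})
                + (L₂.map edges).sum := by rw [hkey1r]
          _ = (edges (z :: r) + {(p, z)} + {(z, q)}) + {(x, y)}
                + (L₂.map edges).sum := by abel
          _ = (edges (z :: (w1 ++ [p])) + edges (z :: q :: w2) + {(p, q)}) + {(x, y)}
                + (L₂.map edges).sum := by rw [hkey4]
          _ = edges (z :: (w1 ++ [p])) + (edges (z :: q :: w2)
                + (L₂.map edges).sum) + ({(x, y)} + {(p, q)}) := by abel

-- ===== Bridge: edges of a nodup list = edge multiset of its formPerm =====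

lemma zip_aux : ∀ (t : List α) (x y : α),
    ((( x :: t).zip (t ++ [y]) : List (α × α)) : Multiset (α × α))
      = pe (x :: t) + {((x :: t).getLast (by simp), y)}
  | [], x, y => by simp [List.zip]
  | b :: t', x, y => by
      have h := zip_aux t' b y
      rw [show ((x :: b :: t').zip ((b :: t') ++ [y])) = (x, b) :: ((b :: t').zip (t' ++ [y]))
          from rfl]
      rw [show (((x, b) :: ((b :: t').zip (t' ++ [y])) : List (α × α)) : Multiset (α × α))
          = (x, b) ::ₘ (((b :: t').zip (t' ++ [y]) : List (α × α)) : Multiset (α × α)) from rfl,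
        h, pe_cons_cons,
        show (x :: b :: t').getLast (by simp) = (b :: t').getLast (by simp) from
          List.getLast_cons (by simp)]
      simp only [← Multiset.singleton_add]
      abel

lemma edges_eq_zip (l : List α) (h : l ≠ []) :
    edges l = ((l.zip (l.rotate 1) : List (α × α)) : Multiset (α × α)) := by
  cases l with
  | nil => exact absurd rfl h
  | cons a t =>
      have hrot : (a :: t).rotate 1 = t ++ [a] := by
        rw [show (1 : ℕ) = 0 + 1 from rfl, List.rotate_cons_succ, List.rotate_zero]
      rw [hrot, zip_aux t a a, edges_eq (a :: t) (by simp)]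
      rfl

lemma zip_rotate_eq_map_formPerm (l : List α) (hn : l.Nodup) :
    l.zip (l.rotate 1) = l.map (fun i => (i, l.formPerm i)) := by
  apply List.ext_getElem
  · simp
  · intro i h1 h2
    have hlen : (l.zip (l.rotate 1)).length = l.length := by simp
    have hi : i < l.length := by simpa [hlen] using h1
    rw [List.getElem_zip, List.getElem_map, List.getElem_rotate,
      List.formPerm_apply_getElem l hn i hi]

lemma edges_eq_map_formPerm (l : List α) (hn : l.Nodup) (h : l ≠ []) :
    edges l = (l : Multiset α).map (fun i => (i, l.formPerm i)) := by
  rw [edges_eq_zip l h, zip_rotate_eq_map_formPerm l hn]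
  rfl

end PMB

-- ===== Determinant expansion and cycle factorization =====

namespace PMB
open Equiv Equiv.Perm Finset

variable {n : ℕ}

lemma principalMinor_expand (M : Matrix (Fin n) (Fin n) ℂ) (S : Finset (Fin n)) :
    principalMinor M S
      = ∑ g ∈ Finset.univ.filter (fun g : Equiv.Perm (Fin n) => ∀ i, g i ≠ i → i ∈ S),
        ((Equiv.Perm.sign g : ℤ) : ℂ) * ∏ i ∈ S, M i (g i) := by
  classical
  have h1 : principalMinor M S
      = ∑ σ : Equiv.Perm {x // x ∈ S}, ((Equiv.Perm.sign σ : ℤ) : ℂ)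
          * ∏ i : {x // x ∈ S}, M (i : Fin n) ((σ i : Fin n)) := by
    rw [principalMinor, ← Matrix.det_transpose, Matrix.transpose_submatrix,
      Matrix.det_apply']
    rfl
  rw [h1]
  refine Finset.sum_bij (fun σ _ => Equiv.Perm.ofSubtype σ) ?_ ?_ ?_ ?_
  · intro σ _
    simp only [Finset.mem_filter, Finset.mem_univ, true_and]
    intro i hi
    by_contra hiS
    exact hi (Equiv.Perm.ofSubtype_apply_of_not_mem σ hiS)
  · intro σ1 _ σ2 _ heq
    apply Equiv.ext
    rintro ⟨x, hx⟩
    apply Subtype.ext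
    have := congrArg (fun (g : Equiv.Perm (Fin n)) => g x) heq
    simpa [Equiv.Perm.ofSubtype_apply_of_mem σ1 hx,
      Equiv.Perm.ofSubtype_apply_of_mem σ2 hx] using this
  · intro g hg
    simp only [Finset.mem_filter, Finset.mem_univ, true_and] at hg
    have hiff : ∀ x : Fin n, x ∈ S ↔ g x ∈ S := by
      intro x
      constructor
      · intro hx
        by_cases h : g x = x
        · rwa [h]
        · exact hg (g x) (fun hc => h (g.injective hc))
      · intro hgx
        by_cases h : g x = x
        · rwa [← h]
        · exact hg x h
    refine ⟨g.subtypePerm (fun x => (hiff x).symm), Finset.mem_univ _, ?_⟩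
    exact Equiv.Perm.ofSubtype_subtypePerm (fun x => (hiff x).symm) hg
  · intro σ _
    congr 1
    · rw [Equiv.Perm.sign_ofSubtype]
    · rw [← Finset.prod_coe_sort S (fun i => M i (Equiv.Perm.ofSubtype σ i))]

      refine Finset.prod_congr rfl fun i _ => ?_
      rw [Equiv.Perm.ofSubtype_apply_of_mem σ i.2]

lemma principalMinor_singleton (M : Matrix (Fin n) (Fin n) ℂ) (i : Fin n) :
    principalMinor M {i} = M i i := by
  letI : Unique {x // x ∈ ({i} : Finset (Fin n))} :=
    ⟨⟨⟨i, Finset.mem_singleton_self i⟩⟩, by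
      rintro ⟨x, hx⟩
      exact Subtype.ext (by simpa using hx)⟩
  rw [principalMinor, Matrix.det_unique]
  have hd : ((default : {x // x ∈ ({i} : Finset (Fin n))}) : Fin n) = i := rfl
  rw [Matrix.submatrix_apply, hd]

lemma support_eq_biUnion (g : Equiv.Perm (Fin n)) :
    g.support = g.cycleFactorsFinset.biUnion Equiv.Perm.support := by
  ext x
  rw [Finset.mem_biUnion]
  exact Equiv.Perm.mem_support_iff_mem_support_of_mem_cycleFactorsFinset

lemma prod_support_cycleFactors (g : Equiv.Perm (Fin n)) (f : Fin n → Fin n → ℂ) :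
    ∏ i ∈ g.support, f i (g i)
      = ∏ c ∈ g.cycleFactorsFinset, ∏ i ∈ c.support, f i (c i) := by
  rw [show ∏ i ∈ g.support, f i (g i)
      = ∏ i ∈ g.cycleFactorsFinset.biUnion Equiv.Perm.support, f i (g i) from by
    rw [← support_eq_biUnion]]
  rw [Finset.prod_biUnion]
  · refine Finset.prod_congr rfl fun c hc => Finset.prod_congr rfl fun i hi => ?_
    rw [(Equiv.Perm.mem_cycleFactorsFinset_iff.mp hc).2 i hi]
  · intro c1 h1 c2 h2 hne
    exact Equiv.Perm.disjoint_iff_disjoint_support.mp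
      (Equiv.Perm.cycleFactorsFinset_pairwise_disjoint g h1 h2 hne)

lemma cycle_exists_list (c : Equiv.Perm (Fin n)) (hc : c.IsCycle) :
    ∃ l : List (Fin n), l.Nodup ∧ 2 ≤ l.length ∧ l.formPerm = c ∧
      l.toFinset = c.support := by
  classical
  obtain ⟨x, hx, -⟩ := id hc
  refine ⟨c.toList x, Equiv.Perm.nodup_toList c x, ?_, ?_, ?_⟩
  · exact Equiv.Perm.two_le_length_toList_iff_mem_support.mpr
      (Equiv.Perm.mem_support.mpr hx)
  · rw [Equiv.Perm.formPerm_toList, hc.cycleOf_eq hx]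
  · ext y
    rw [List.mem_toFinset, Equiv.Perm.mem_toList_iff]
    constructor
    · rintro ⟨hsc, hxs⟩
      exact (hsc.mem_support_iff).mp hxs
    · intro hy
      exact ⟨hc.sameCycle hx (Equiv.Perm.mem_support.mp hy),
        Equiv.Perm.mem_support.mpr hx⟩

end PMB


-- ===== Boundedness machinery =====

namespace PMB
open Equiv Equiv.Perm Finset

def Bdd (f : ℕ → ℂ) : Prop := ∃ B : ℝ, ∀ k, ‖f k‖ ≤ B

lemma Bdd.congr {f g : ℕ → ℂ} (h : ∀ k, f k = g k) (hf : Bdd f) : Bdd g := by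
  obtain ⟨B, hB⟩ := hf
  exact ⟨B, fun k => by rw [← h k]; exact hB k⟩

lemma Bdd.const (c : ℂ) : Bdd (fun _ => c) := ⟨‖c‖, fun _ => le_rfl⟩

lemma Bdd.mul {f g : ℕ → ℂ} (hf : Bdd f) (hg : Bdd g) : Bdd (fun k => f k * g k) := by
  obtain ⟨B1, h1⟩ := hf
  obtain ⟨B2, h2⟩ := hg
  refine ⟨max B1 0 * max B2 0, fun k => ?_⟩
  rw [norm_mul]
  exact mul_le_mul ((h1 k).trans (le_max_left _ _)) ((h2 k).trans (le_max_left _ _))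
    (norm_nonneg _) (le_max_right _ _)

lemma Bdd.add {f g : ℕ → ℂ} (hf : Bdd f) (hg : Bdd g) : Bdd (fun k => f k + g k) := by
  obtain ⟨B1, h1⟩ := hf
  obtain ⟨B2, h2⟩ := hg
  exact ⟨B1 + B2, fun k => (norm_add_le _ _).trans (add_le_add (h1 k) (h2 k))⟩

lemma Bdd.sub {f g : ℕ → ℂ} (hf : Bdd f) (hg : Bdd g) : Bdd (fun k => f k - g k) := by
  obtain ⟨B1, h1⟩ := hf
  obtain ⟨B2, h2⟩ := hg
  exact ⟨B1 + B2, fun k => (norm_sub_le _ _).trans (add_le_add (h1 k) (h2 k))⟩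

lemma bdd_finsetSum {ι : Type*} (s : Finset ι) (f : ι → ℕ → ℂ)
    (h : ∀ i ∈ s, Bdd (f i)) : Bdd (fun k => ∑ i ∈ s, f i k) := by
  induction s using Finset.cons_induction with
  | empty => exact ⟨0, by simp⟩
  | cons a s ha ih =>
      have h1 := h a (Finset.mem_cons_self a s)
      have h2 := ih (fun i hi => h i (Finset.mem_cons_of_mem hi))
      exact Bdd.congr (fun k => (Finset.sum_cons ha).symm) (h1.add h2)

lemma bdd_finsetProd {ι : Type*} (s : Finset ι) (f : ι → ℕ → ℂ)
    (h : ∀ i ∈ s, Bdd (f i)) : Bdd (fun k => ∏ i ∈ s, f i k) := by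
  induction s using Finset.cons_induction with
  | empty => exact Bdd.congr (fun k => by simp) (Bdd.const 1)
  | cons a s ha ih =>
      have h1 := h a (Finset.mem_cons_self a s)
      have h2 := ih (fun i hi => h i (Finset.mem_cons_of_mem hi))
      exact Bdd.congr (fun k => (Finset.prod_cons ha).symm) (h1.mul h2)

lemma sq_bound {x B1 B2 : ℝ} (hx : 0 ≤ x) (h1 : 0 ≤ B1) (h2 : 0 ≤ B2)
    (h : x * x ≤ x * B1 + B2) : x ≤ B1 + Real.sqrt B2 := by
  by_cases hc : x ≤ B1
  · have := Real.sqrt_nonneg B2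
    linarith
  · push_neg at hc
    have h4 : (x - B1) * (x - B1) ≤ B2 := by nlinarith
    have h5 : x - B1 ≤ Real.sqrt B2 := by
      nlinarith [Real.sq_sqrt h2, Real.sqrt_nonneg B2]
    linarith

variable {n : ℕ} (A : ℕ → Matrix (Fin n) (Fin n) ℂ)

def monE (M : Multiset (Fin n × Fin n)) : ℕ → ℂ :=
  fun k => (M.map (fun e => A k e.1 e.2)).prod

lemma monE_add (M1 M2 : Multiset (Fin n × Fin n)) (k : ℕ) :
    monE A (M1 + M2) k = monE A M1 k * monE A M2 k := by
  simp [monE, Multiset.map_add]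

lemma bdd_monE_parts (L : List (List (Fin n))) (h : ∀ l ∈ L, Bdd (monE A (edges l))) :
    Bdd (monE A ((L.map edges).sum)) := by
  induction L with
  | nil => exact Bdd.congr (fun k => by simp [monE]) (Bdd.const 1)
  | cons l L ih =>
      have h1 := h l (by simp)
      have h2 := ih (fun l' hl' => h l' (by simp [hl']))
      refine Bdd.congr (fun k => ?_) (h1.mul h2)
      rw [List.map_cons, List.sum_cons, monE_add]

lemma monE_edges_formPerm (l : List (Fin n)) (hn : l.Nodup) (hne : l ≠ []) (k : ℕ) :
    monE A (edges l) k = ∏ i ∈ l.toFinset, A k i (l.formPerm i) := by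
  rw [monE, edges_eq_map_formPerm l hn hne, Multiset.map_map,
    List.prod_toFinset _ hn]
  rfl

theorem bdd_cycle_list
    (hb : ∀ I : Finset (Fin n), ∃ B : ℝ, ∀ k, ‖principalMinor (A k) I‖ ≤ B) :
    ∀ (m : ℕ) (l : List (Fin n)), l.Nodup → 2 ≤ l.length → l.length ≤ m →
      Bdd (monE A (edges l)) := by
  intro m
  induction m with
  | zero => intro l _ h2 h0; omega
  | succ m IH =>
    intro l hn h2 hle
    by_cases hcase : l.length ≤ m
    · exact IH l hn h2 hcase
    have hlen : l.length = m + 1 := by omega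
    set S := l.toFinset with hSdef
    have hScard : S.card = m + 1 := by rw [hSdef, List.toFinset_card_of_nodup hn, hlen]
    have hlne : l ≠ [] := by intro h; rw [h] at h2; simp at h2
    have hnsing : ∀ x : Fin n, l ≠ [x] := by intro x h; rw [h] at h2; simp at h2
    set π := l.formPerm with hπdef
    have hπc : π.IsCycle := List.isCycle_formPerm hn h2
    have hπS : π.support = S := List.support_formPerm_of_nodup l hn hnsing
    -- small cycles bounded
    have hsmall : ∀ c : Equiv.Perm (Fin n), c.IsCycle → c.support.card ≤ m →
        Bdd (fun k => ∏ i ∈ c.support, A k i (c i)) := by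
      intro c hc hcard
      obtain ⟨lc, hc1, hc2, hc3, hc4⟩ := cycle_exists_list c hc
      have hlc : lc.length ≤ m := by
        rw [← List.toFinset_card_of_nodup hc1, hc4]; exact hcard
      refine Bdd.congr (fun k => ?_) (IH lc hc1 hc2 hlc)
      rw [monE_edges_formPerm A lc hc1 (by rintro rfl; simp at hc2) k]
      simp only [hc3, hc4]
    -- diagonal entries bounded
    have hdiag : ∀ i : Fin n, Bdd (fun k => A k i i) := by
      intro i
      obtain ⟨B, hB⟩ := hb {i}
      refine ⟨B, fun k => ?_⟩
      have hBk := hB k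
      rw [principalMinor_singleton] at hBk
      exact hBk
    -- non-full permutations bounded
    have hpermb : ∀ g : Equiv.Perm (Fin n), (∀ i, g i ≠ i → i ∈ S) →
        ¬(g.IsCycle ∧ g.support = S) → Bdd (fun k => ∏ i ∈ S, A k i (g i)) := by
      intro g hgS hgF
      have hsupp : g.support ⊆ S := fun i hi => hgS i (Equiv.Perm.mem_support.mp hi)
      have hfac : ∀ c ∈ g.cycleFactorsFinset, c.support.card ≤ m := by
        intro c hc
        obtain ⟨hcyc, happ⟩ := Equiv.Perm.mem_cycleFactorsFinset_iff.mp hc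
        have hcsub : c.support ⊆ g.support := by
          intro a ha
          rw [Equiv.Perm.mem_support, ← happ a ha]
          exact Equiv.Perm.mem_support.mp ha
        have hle2 : c.support.card ≤ m + 1 := by
          calc c.support.card ≤ S.card := Finset.card_le_card (hcsub.trans hsupp)
            _ = m + 1 := hScard
        by_contra hgt
        push_neg at hgt
        have hceq : c.support = S :=
          Finset.eq_of_subset_of_card_le (hcsub.trans hsupp) (by omega)
        have hgsupp : g.support = S :=
          Finset.Subset.antisymm hsupp (hceq ▸ hcsub)
        have hcg : c = g := by
          apply Equiv.ext
          intro a
          by_cases ha : a ∈ c.support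
          · exact happ a ha
          · rw [Equiv.Perm.notMem_support.mp ha,
              Equiv.Perm.notMem_support.mp (fun hag => ha ?_)]
            rw [hceq, ← hgsupp]
            exact hag
        exact hgF ⟨hcg ▸ hcyc, hcg ▸ hceq⟩
      have hsplit : ∀ k, ∏ i ∈ S, A k i (g i)
          = (∏ i ∈ S \ g.support, A k i i)
            * ∏ c ∈ g.cycleFactorsFinset, ∏ i ∈ c.support, A k i (c i) := by
        intro k
        rw [← Finset.prod_sdiff hsupp, ← prod_support_cycleFactors g (fun i j => A k i j)]
        congr 1
        refine Finset.prod_congr rfl fun i hi => ?_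
        rw [Equiv.Perm.notMem_support.mp (Finset.mem_sdiff.mp hi).2]
      refine Bdd.congr (fun k => (hsplit k).symm) (Bdd.mul ?_ ?_)
      · exact bdd_finsetProd _ _ (fun i _ => hdiag i)
      · exact bdd_finsetProd _ _ (fun c hc =>
          hsmall c (Equiv.Perm.mem_cycleFactorsFinset_iff.mp hc).1 (hfac c hc))
    -- the permutation finsets
    set P : Finset (Equiv.Perm (Fin n)) :=
      Finset.univ.filter (fun g : Equiv.Perm (Fin n) => ∀ i, g i ≠ i → i ∈ S) with hPdef
    classical
    set F : Finset (Equiv.Perm (Fin n)) :=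
      Finset.univ.filter (fun g : Equiv.Perm (Fin n) => g.IsCycle ∧ g.support = S) with hFdef
    have hFmem : ∀ g : Equiv.Perm (Fin n), g ∈ F ↔ g.IsCycle ∧ g.support = S := by
      intro g; rw [hFdef]; simp
    have hPmem : ∀ g : Equiv.Perm (Fin n), g ∈ P ↔ ∀ i, g i ≠ i → i ∈ S := by
      intro g; rw [hPdef]; simp
    have hFP : F ⊆ P := by
      intro g hg
      rw [hFmem] at hg
      rw [hPmem]
      intro i hi
      rw [← hg.2]
      exact Equiv.Perm.mem_support.mpr hi
    set ε : ℂ := (-1) ^ (m + 2) with hεdef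
    have hsgn : ∀ g ∈ F, ((Equiv.Perm.sign g : ℤ) : ℂ) = ε := by
      intro g hg
      rw [hFmem] at hg
      rw [hg.1.sign, hg.2, hScard, hεdef]
      push_cast
      ring
    have hε : ε * ε = 1 := by
      rw [hεdef, ← pow_add]
      exact Even.neg_one_pow ⟨m + 2, by ring⟩
    -- e1 bounded
    have he1 : Bdd (fun k => ∑ γ ∈ F, ∏ i ∈ S, A k i (γ i)) := by
      have hPM : ∀ k, principalMinor (A k) S
          = ∑ g ∈ P, ((Equiv.Perm.sign g : ℤ) : ℂ) * ∏ i ∈ S, A k i (g i) := by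
        intro k
        rw [principalMinor_expand (A k) S]
      have hrepr : ∀ k, ∑ γ ∈ F, ∏ i ∈ S, A k i (γ i)
          = ε * (principalMinor (A k) S
            - ∑ g ∈ P \ F, ((Equiv.Perm.sign g : ℤ) : ℂ) * ∏ i ∈ S, A k i (g i)) := by
        intro k
        have h0 : ∑ g ∈ P, ((Equiv.Perm.sign g : ℤ) : ℂ) * ∏ i ∈ S, A k i (g i)
            = ∑ g ∈ P \ F, ((Equiv.Perm.sign g : ℤ) : ℂ) * ∏ i ∈ S, A k i (g i)
              + ε * ∑ γ ∈ F, ∏ i ∈ S, A k i (γ i) := by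
          rw [← Finset.sum_sdiff hFP]
          congr 1
          rw [Finset.mul_sum]
          exact Finset.sum_congr rfl fun g hg => by rw [hsgn g hg]
        rw [hPM, h0]
        have : ∑ g ∈ P \ F, ((Equiv.Perm.sign g : ℤ) : ℂ) * ∏ i ∈ S, A k i (g i)
              + ε * ∑ γ ∈ F, ∏ i ∈ S, A k i (γ i)
              - ∑ g ∈ P \ F, ((Equiv.Perm.sign g : ℤ) : ℂ) * ∏ i ∈ S, A k i (g i)
            = ε * ∑ γ ∈ F, ∏ i ∈ S, A k i (γ i) := by ring
        rw [this, ← mul_assoc, hε, one_mul]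
      refine Bdd.congr (fun k => (hrepr k).symm) ?_
      refine Bdd.mul (Bdd.const ε) (Bdd.sub ?_ ?_)
      · obtain ⟨B, hB⟩ := hb S
        exact ⟨B, hB⟩
      · refine bdd_finsetSum _ _ (fun g hg => ?_)
        have hg1 := Finset.mem_sdiff.mp hg
        refine Bdd.mul (Bdd.const _) (hpermb g ((hPmem g).mp hg1.1) ?_)
        intro hcon
        exact hg1.2 ((hFmem g).mpr hcon)
    -- pairwise products bounded
    have hpair : ∀ γ ∈ F, γ ≠ π →
        Bdd (fun k => (∏ i ∈ S, A k i (π i)) * ∏ i ∈ S, A k i (γ i)) := by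
      intro γ hγF hγne
      rw [hFmem] at hγF
      obtain ⟨lγ, hg1, hg2, hg3, hg4⟩ := cycle_exists_list γ hγF.1
      have hγlen : lγ.length = m + 1 := by
        rw [← List.toFinset_card_of_nodup hg1, hg4, hγF.2, hScard]
      have hSeq : l.toFinset = lγ.toFinset := by rw [hg4, hγF.2, hSdef]
      have hnrot : ¬ l ~r lγ := by
        intro hrot
        apply hγne
        rw [← hg3, hπdef, (List.formPerm_eq_formPerm_iff hn hg1).mpr (Or.inl hrot)]
      obtain ⟨L, hL, hsum⟩ := DECL (m + 1) l lγ hlen hγlen hn hg1 hSeq hnrot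
      have hparts : ∀ l' ∈ L, Bdd (monE A (edges l')) := by
        intro l' hl'
        obtain ⟨h1', h2', h3', _⟩ := hL l' hl'
        exact IH l' h1' h2' (by omega)
      refine Bdd.congr (fun k => ?_) (bdd_monE_parts A L hparts)
      have h5 : monE A (edges l + edges lγ) k = monE A ((L.map edges).sum) k := by
        rw [hsum]
      rw [← h5, monE_add]
      congr 1
      · rw [monE_edges_formPerm A l hn hlne k]
      · rw [monE_edges_formPerm A lγ hg1 (by rintro rfl; simp at hg2) k]
        simp only [hg3, hg4, hγF.2]
    -- finish by the quadratic trick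
    have hπF : π ∈ F := (hFmem π).mpr ⟨hπc, hπS⟩
    obtain ⟨B1, hB1⟩ := he1
    obtain ⟨B2, hB2⟩ := bdd_finsetSum (F.erase π)
      (fun γ => fun k => (∏ i ∈ S, A k i (π i)) * ∏ i ∈ S, A k i (γ i))
      (fun γ hγ => hpair γ (Finset.mem_of_mem_erase hγ) (Finset.ne_of_mem_erase hγ))
    refine ⟨max B1 0 + Real.sqrt (max B2 0), fun k => ?_⟩
    have hmon : monE A (edges l) k = ∏ i ∈ S, A k i (π i) := by
      rw [monE_edges_formPerm A l hn hlne k]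
    rw [hmon]
    have hiden : (∏ i ∈ S, A k i (π i)) * (∏ i ∈ S, A k i (π i))
        = (∏ i ∈ S, A k i (π i)) * (∑ γ ∈ F, ∏ i ∈ S, A k i (γ i))
          - ∑ γ ∈ F.erase π, (∏ i ∈ S, A k i (π i)) * ∏ i ∈ S, A k i (γ i) := by
      rw [Finset.mul_sum, ← Finset.add_sum_erase F _ hπF]
      ring
    have hx2 : ‖∏ i ∈ S, A k i (π i)‖ * ‖∏ i ∈ S, A k i (π i)‖
        ≤ ‖∏ i ∈ S, A k i (π i)‖ * max B1 0 + max B2 0 := by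
      calc ‖∏ i ∈ S, A k i (π i)‖ * ‖∏ i ∈ S, A k i (π i)‖
          = ‖(∏ i ∈ S, A k i (π i)) * (∏ i ∈ S, A k i (π i))‖ := (norm_mul _ _).symm
        _ = ‖(∏ i ∈ S, A k i (π i)) * (∑ γ ∈ F, ∏ i ∈ S, A k i (γ i))
              - ∑ γ ∈ F.erase π, (∏ i ∈ S, A k i (π i)) * ∏ i ∈ S, A k i (γ i)‖ := by
            rw [hiden]
        _ ≤ ‖(∏ i ∈ S, A k i (π i)) * (∑ γ ∈ F, ∏ i ∈ S, A k i (γ i))‖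
              + ‖∑ γ ∈ F.erase π, (∏ i ∈ S, A k i (π i)) * ∏ i ∈ S, A k i (γ i)‖ :=
            norm_sub_le _ _
        _ ≤ ‖∏ i ∈ S, A k i (π i)‖ * max B1 0 + max B2 0 := by
            rw [norm_mul]
            exact add_le_add
              (mul_le_mul_of_nonneg_left ((hB1 k).trans (le_max_left _ _)) (norm_nonneg _))
              ((hB2 k).trans (le_max_left _ _))
    exact sq_bound (norm_nonneg _) (le_max_right _ _) (le_max_right _ _) hx2

end PMB

theorem cycles_bounded_of_principal_minors_bounded {n : ℕ}
    (A : ℕ → Matrix (Fin n) (Fin n) ℂ)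
    (hb : ∀ I : Finset (Fin n), ∃ B : ℝ, ∀ k, ‖principalMinor (A k) I‖ ≤ B) :
    ∀ π : Equiv.Perm (Fin n), π.IsCycle →
      ∃ B : ℝ, ∀ k, ‖∏ i ∈ π.support, A k i (π i)‖ ≤ B := by
  intro π hπ
  obtain ⟨l, h1, h2, h3, h4⟩ := PMB.cycle_exists_list π hπ
  obtain ⟨B, hB⟩ := PMB.bdd_cycle_list A hb l.length l h1 h2 le_rfl
  refine ⟨B, fun k => ?_⟩
  have hE := hB k
  rw [PMB.monE_edges_formPerm A l h1 (by rintro rfl; simp at h2) k, h3, h4] at hE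
  exact hE
end

section
/- For n ≤ 3, every vector u ∈ ℂ^{2^n} with u_∅ = 1 is realizable as the vector of principal minors of some n×n complex matrix; that is, there exists an n×n complex matrix A with det A_I = u_I for all I ⊆ {1,...,n}. -/
lemma pm_eq {n k : ℕ} (A : Matrix (Fin n) (Fin n) ℂ) (I : Finset (Fin n))
    (f : Fin k → {x // x ∈ I}) (hf : Function.Bijective f) :
    principalMinor A I = (A.submatrix (fun i => ((f i : Fin n))) (fun j => ((f j : Fin n)))).det := by
  rw [principalMinor, ← Matrix.det_submatrix_equiv_self (Equiv.ofBijective f hf)]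
  rfl

lemma forall_finset_fin1 (P : Finset (Fin 1) → Prop) (he : P ∅) (h0 : P {0}) : ∀ I, P I := by
  intro I
  fin_cases I
  · exact he
  · exact h0

lemma forall_finset_fin2 (P : Finset (Fin 2) → Prop) (he : P ∅) (h0 : P {0}) (h1 : P {1})
    (h01 : P {0,1}) : ∀ I, P I := by
  intro I
  fin_cases I
  · exact he
  · exact h0
  · exact h1
  · exact h01

lemma forall_finset_fin3 (P : Finset (Fin 3) → Prop) (he : P ∅) (h0 : P {0}) (h1 : P {1})
    (h2 : P {2}) (h01 : P {0,1}) (h02 : P {0,2}) (h12 : P {1,2}) (h012 : P {0,1,2}) :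
    ∀ I, P I := by
  intro I
  fin_cases I
  · exact he
  · exact h0
  · exact h1
  · exact h01
  · exact h2
  · exact h02
  · exact h12
  · exact h012

/-- All eight principal minors of a `3 × 3` matrix. -/
lemma pm3 (A : Matrix (Fin 3) (Fin 3) ℂ) :
    principalMinor A ∅ = 1 ∧
    principalMinor A {0} = A 0 0 ∧
    principalMinor A {1} = A 1 1 ∧
    principalMinor A {2} = A 2 2 ∧
    principalMinor A {0,1} = A 0 0 * A 1 1 - A 0 1 * A 1 0 ∧
    principalMinor A {0,2} = A 0 0 * A 2 2 - A 0 2 * A 2 0 ∧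
    principalMinor A {1,2} = A 1 1 * A 2 2 - A 1 2 * A 2 1 ∧
    principalMinor A {0,1,2} = A.det := by
  refine ⟨?_, ?_, ?_, ?_, ?_, ?_, ?_, ?_⟩
  · rw [pm_eq A ∅ ![] (by decide), Matrix.det_fin_zero]
  · rw [pm_eq A {0} ![⟨0, by decide⟩] (by decide), Matrix.det_fin_one]; rfl
  · rw [pm_eq A {1} ![⟨1, by decide⟩] (by decide), Matrix.det_fin_one]; rfl
  · rw [pm_eq A {2} ![⟨2, by decide⟩] (by decide), Matrix.det_fin_one]; rfl
  · rw [pm_eq A {0,1} ![⟨0, by decide⟩, ⟨1, by decide⟩] (by decide), Matrix.det_fin_two]; rfl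
  · rw [pm_eq A {0,2} ![⟨0, by decide⟩, ⟨2, by decide⟩] (by decide), Matrix.det_fin_two]; rfl
  · rw [pm_eq A {1,2} ![⟨1, by decide⟩, ⟨2, by decide⟩] (by decide), Matrix.det_fin_two]; rfl
  · rw [pm_eq A {0,1,2} ![⟨0, by decide⟩, ⟨1, by decide⟩, ⟨2, by decide⟩] (by decide)]
    refine congrArg Matrix.det ?_
    ext i j
    fin_cases i <;> fin_cases j <;> rfl

/-- The n = 3 case of the realizability theorem. -/
lemma realizable3 (u : Finset (Fin 3) → ℂ) (hempty : u ∅ = 1) :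
    ∃ A : Matrix (Fin 3) (Fin 3) ℂ, ∀ I : Finset (Fin 3), principalMinor A I = u I := by
  set u0 := u {0}
  set u1 := u {1}
  set u2 := u {2}
  set u01 := u {0,1}
  set u02 := u {0,2}
  set u12 := u {1,2}
  set u012 := u {0,1,2}
  set p01 := u0 * u1 - u01 with hp01def
  set p02 := u0 * u2 - u02 with hp02def
  set p12 := u1 * u2 - u12 with hp12def
  set s := u012 - u0 * u1 * u2 + u0 * p12 + u1 * p02 + u2 * p01 with hsdef
  -- We produce a matrix with diagonal u0, u1, u2, prescribed products of opposite
  -- off-diagonal entries, and prescribed sum of the two cyclic products.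
  have key : ∀ A : Matrix (Fin 3) (Fin 3) ℂ,
      A 0 0 = u0 → A 1 1 = u1 → A 2 2 = u2 →
      A 0 1 * A 1 0 = p01 → A 0 2 * A 2 0 = p02 → A 1 2 * A 2 1 = p12 →
      A 0 1 * A 1 2 * A 2 0 + A 0 2 * A 1 0 * A 2 1 = s →
      ∀ I : Finset (Fin 3), principalMinor A I = u I := by
    intro A h00 h11 h22 hq01 hq02 hq12 hcyc
    obtain ⟨m_e, m0, m1, m2, m01, m02, m12, m012⟩ := pm3 A
    refine forall_finset_fin3 _ ?_ ?_ ?_ ?_ ?_ ?_ ?_ ?_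
    · rw [m_e, hempty]
    · rw [m0, h00]
    · rw [m1, h11]
    · rw [m2, h22]
    · rw [m01, h00, h11, hq01, hp01def]; ring
    · rw [m02, h00, h22, hq02, hp02def]; ring
    · rw [m12, h11, h22, hq12, hp12def]; ring
    · rw [m012, Matrix.det_fin_three, h00, h11, h22]
      have : A 0 1 * A 1 2 * A 2 0 + A 0 2 * A 1 0 * A 2 1 = s := hcyc
      linear_combination this + (-u2) * hq01 + (-u1) * hq02 + (-u0) * hq12
  by_cases h01 : p01 = 0
  · refine ⟨![![u0, 0, 1], ![s, u1, p12], ![p02, 1, u2]], key _ rfl rfl rfl ?_ ?_ ?_ ?_⟩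
    · show (0:ℂ) * s = p01; rw [h01]; ring
    · show (1:ℂ) * p02 = p02; ring
    · show p12 * 1 = p12; ring
    · show 0 * p12 * p02 + 1 * s * 1 = s; ring
  by_cases h02 : p02 = 0
  · refine ⟨![![u0, 1, 0], ![p01, u1, 1], ![s, p12, u2]], key _ rfl rfl rfl ?_ ?_ ?_ ?_⟩
    · show (1:ℂ) * p01 = p01; ring
    · show (0:ℂ) * s = p02; rw [h02]; ring
    · show (1:ℂ) * p12 = p12; ring
    · show 1 * 1 * s + 0 * p01 * p12 = s; ring
  by_cases h12 : p12 = 0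
  · refine ⟨![![u0, 1, p02], ![p01, u1, s], ![1, 0, u2]], key _ rfl rfl rfl ?_ ?_ ?_ ?_⟩
    · show (1:ℂ) * p01 = p01; ring
    · show p02 * 1 = p02; ring
    · show s * (0:ℂ) = p12; rw [h12]; ring
    · show 1 * s * 1 + p02 * p01 * 0 = s; ring
  · -- all three products are nonzero
    set q := p01 * p02 * p12 with hqdef
    have hq : q ≠ 0 := by
      simp [hqdef, h01, h02, h12]
    obtain ⟨r, hr⟩ := IsAlgClosed.exists_pow_nat_eq (k := ℂ) (s ^ 2 - 4 * q) (n := 2) (by norm_num)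
    set x := (s + r) / 2 with hxdef
    have hxy : x * ((s - r) / 2) = q := by
      have h4 : (s + r) / 2 * ((s - r) / 2) = (s ^ 2 - r ^ 2) / 4 := by ring
      rw [hxdef, h4, hr]; ring
    have hx : x ≠ 0 := by
      intro h
      rw [h, zero_mul] at hxy
      exact hq hxy.symm
    refine ⟨![![u0, 1, p02 / x], ![p01, u1, 1], ![x, p12, u2]], key _ rfl rfl rfl ?_ ?_ ?_ ?_⟩
    · show (1:ℂ) * p01 = p01; ring
    · show p02 / x * x = p02; field_simp
    · show (1:ℂ) * p12 = p12; ring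
    · show 1 * 1 * x + p02 / x * p01 * p12 = s
      have h2 : p02 / x * p01 * p12 = (s - r) / 2 := by
        rw [div_mul_eq_mul_div, div_mul_eq_mul_div, div_eq_iff hx]
        linear_combination (-1 : ℂ) * hxy - hqdef
      rw [h2, hxdef]; ring

/-- For `n ≤ 3`, every vector with `u_∅ = 1` is realizable as principal minors. -/
theorem realizable_of_le_three {n : ℕ} (hn : n ≤ 3)
    (u : Finset (Fin n) → ℂ) (hempty : u ∅ = 1) :
    ∃ A : Matrix (Fin n) (Fin n) ℂ, ∀ I : Finset (Fin n), principalMinor A I = u I := by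
  interval_cases n
  · -- n = 0
    refine ⟨0, fun I => ?_⟩
    have hI : I = ∅ := Finset.eq_empty_of_isEmpty I
    subst hI
    rw [pm_eq 0 ∅ ![] (by decide), Matrix.det_fin_zero, hempty]
  · -- n = 1
    refine ⟨Matrix.of ![![u {0}]], forall_finset_fin1 _ ?_ ?_⟩
    · rw [pm_eq (n := 1) _ ∅ ![] (by decide), Matrix.det_fin_zero, hempty]
    · rw [pm_eq (n := 1) _ {0} ![⟨0, by decide⟩] (by decide), Matrix.det_fin_one]; rfl
  · -- n = 2
    refine ⟨Matrix.of ![![u {0}, u {0} * u {1} - u {0,1}], ![1, u {1}]], forall_finset_fin2 _ ?_ ?_ ?_ ?_⟩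
    · rw [pm_eq (n := 2) _ ∅ ![] (by decide), Matrix.det_fin_zero, hempty]
    · rw [pm_eq (n := 2) _ {0} ![⟨0, by decide⟩] (by decide), Matrix.det_fin_one]; rfl
    · rw [pm_eq (n := 2) _ {1} ![⟨1, by decide⟩] (by decide), Matrix.det_fin_one]; rfl
    · rw [pm_eq (n := 2) _ {0,1} ![⟨0, by decide⟩, ⟨1, by decide⟩] (by decide), Matrix.det_fin_two]
      show u {0} * u {1} - (u {0} * u {1} - u {0,1}) * 1 = u {0,1}
      ring
  · -- n = 3
    exact realizable3 u hempty
end
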